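/- Let q be an odd prime power, f ∈ Fq[X], f ≠ X, a monic irreducible polynomial of degree n and order e, β ∈ F_{q^n} a root of f, and let C ∈ Fq[X] be the polynomial satisfying C(X²) = (−1)^n f(X)·f(−X). If C is irreducible, then C is the minimal polynomial of β² over Fq and the order of C equals e/gcd(e,2). -/
import Mathlib


open Polynomial

/-- Let `q` be an odd prime power, `f ∈ F_q[X]`, `f ≠ X`, monic irreducible
of degree `n` and order `e`, `β ∈ F_{q^n}` a root of `f`, and `C ∈ F_q[X]` the polynomial
with `C(X²) = (−1)^n f(X) f(−X)`. If `C` is irreducible, then `C` is the minimal polynomial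
of `β²` over `F_q` and the order of `C` equals `e / gcd(e,2)`. -/
theorem stmt1 {F E : Type*} [Field F] [Fintype F] [Field E] [Algebra F E]
    (hq : Odd (Fintype.card F))
    (f : F[X]) (n e : ℕ) (hmonic : f.Monic) (hirr : Irreducible f) (hfX : f ≠ X)
    (hdeg : f.natDegree = n)
    (he : IsLeast {e' : ℕ | 0 < e' ∧ f ∣ X ^ e' - 1} e)
    (β : E) (hβ : aeval β f = 0)
    (C : F[X]) (hC : C.comp (X ^ 2) = (-1) ^ n * (f * f.comp (-X)))
    (hCirr : Irreducible C) :
    C = minpoly F (β ^ 2) ∧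
      IsLeast {e' : ℕ | 0 < e' ∧ C ∣ X ^ e' - 1} (e / Nat.gcd e 2) := by
  have hfne : f ≠ 0 := hmonic.ne_zero
  -- C is monic
  have hCmonic : C.Monic := by
    have h1 : (C.comp (X ^ 2 : F[X])).leadingCoeff
        = C.leadingCoeff * ((X : F[X]) ^ 2).leadingCoeff ^ C.natDegree := by
      apply leadingCoeff_comp
      simp
    have h2 : (f.comp (-X : F[X])).leadingCoeff
        = f.leadingCoeff * ((-X : F[X])).leadingCoeff ^ f.natDegree := by
      apply leadingCoeff_comp
      simp
    have h3 : (((-1) ^ n * (f * f.comp (-X)) : F[X])).leadingCoeff = 1 := by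
      rw [leadingCoeff_mul, leadingCoeff_mul, h2, hmonic.leadingCoeff, hdeg]
      simp [← pow_add, ← two_mul, pow_mul]
    rw [hC, h3] at h1
    have := h1.symm
    rw [leadingCoeff_X_pow, one_pow, mul_one] at this
    exact this
  -- f is the minimal polynomial of β
  have hminf : f = minpoly F β := minpoly.eq_of_irreducible_of_monic hirr hβ hmonic
  -- β² is a root of C
  have hCroot : aeval (β ^ 2) C = 0 := by
    have := congrArg (aeval β) hC
    rw [aeval_comp] at this
    simp only [map_mul, map_pow, map_neg, map_one, hβ, zero_mul, mul_zero] at this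
    simpa using this
  have hminC : C = minpoly F (β ^ 2) :=
    minpoly.eq_of_irreducible_of_monic hCirr hCroot hCmonic
  refine ⟨hminC, ?_⟩
  -- divisibility translations
  have hfd : ∀ m : ℕ, f ∣ X ^ m - 1 ↔ β ^ m = 1 := by
    intro m
    constructor
    · rintro ⟨g, hg⟩
      have := congrArg (aeval β) hg
      simp [hβ] at this
      exact sub_eq_zero.mp this
    · intro h
      rw [hminf]
      apply minpoly.dvd
      simp [h]
  have hCd : ∀ m : ℕ, C ∣ X ^ m - 1 ↔ (β ^ 2) ^ m = 1 := by
    intro m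
    constructor
    · rintro ⟨g, hg⟩
      have := congrArg (aeval (β ^ 2)) hg
      simp [hCroot] at this
      exact sub_eq_zero.mp this
    · intro h
      rw [hminC]
      apply minpoly.dvd
      simp [h]
  -- β has finite order
  have hβe : β ^ e = 1 := (hfd e).mp he.1.2
  have hfin : IsOfFinOrder β :=
    isOfFinOrder_iff_pow_eq_one.mpr ⟨e, he.1.1, hβe⟩
  have hfin2 : IsOfFinOrder (β ^ 2) := hfin.pow
  -- e = orderOf β
  have heo : e = orderOf β := by
    have hle : IsLeast {e' : ℕ | 0 < e' ∧ f ∣ X ^ e' - 1} (orderOf β) := by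
      constructor
      · exact ⟨hfin.orderOf_pos, (hfd _).mpr (pow_orderOf_eq_one β)⟩
      · rintro m ⟨hm, hdvd⟩
        exact orderOf_le_of_pow_eq_one hm ((hfd m).mp hdvd)
    exact he.unique hle
  have hord2 : e / Nat.gcd e 2 = orderOf (β ^ 2) := by
    rw [heo, hfin.orderOf_pow]
  rw [hord2]
  constructor
  · exact ⟨hfin2.orderOf_pos, (hCd _).mpr (pow_orderOf_eq_one (β ^ 2))⟩
  · rintro m ⟨hm, hdvd⟩
    exact orderOf_le_of_pow_eq_one hm ((hCd m).mp hdvd)
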